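/- Let S be a finite set of points in the plane such that the unit disk graph G¹(S) (edges between points at Euclidean distance ≤ 1) is connected. Then the undirected Yao graph Y₄ of the disk graph G^√2(S) is connected, where Y₄ is built using four quarter-plane cones at each point, retaining in each nonempty cone a shortest incident edge of G^√2. -/

import Mathlib

/-- Euclidean distance between two points of the plane `ℝ × ℝ`. -/
noncomputable def dE (p q : ℝ × ℝ) : ℝ := Real.sqrt ((p.1 - q.1)^2 + (p.2 - q.2)^2)

lemma dE_comm (p q : ℝ × ℝ) : dE p q = dE q p := by
  unfold dE
  rw [show (p.1 - q.1)^2 = (q.1 - p.1)^2 by ring, show (p.2 - q.2)^2 = (q.2 - p.2)^2 by ring]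

/-- The `d`-radius disk graph on a finite point set `S`: two distinct points are
adjacent iff their Euclidean distance is at most `d`. -/
noncomputable def diskGraph (S : Finset (ℝ × ℝ)) (d : ℝ) :
    SimpleGraph {p : ℝ × ℝ // p ∈ S} where
  Adj p q := p ≠ q ∧ dE p.1 q.1 ≤ d
  symm := ⟨by
    rintro p q ⟨h1, h2⟩
    exact ⟨h1.symm, by rwa [dE_comm]⟩⟩
  loopless := ⟨fun p h => h.1 rfl⟩

/-- The four half-open quarter-plane cones at `p`, delimited by the rays in the
`+x`, `+y`, `-x`, `-y` directions; each cone includes its counterclockwise-first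
bounding ray and excludes the other.  `inCone4 i p q` says `q` lies in the `i`-th
cone of `p`. -/
def inCone4 : Fin 4 → ℝ × ℝ → ℝ × ℝ → Prop
  | 0, p, q => 0 < q.1 - p.1 ∧ 0 ≤ q.2 - p.2
  | 1, p, q => 0 < q.2 - p.2 ∧ q.1 - p.1 ≤ 0
  | 2, p, q => q.1 - p.1 < 0 ∧ q.2 - p.2 ≤ 0
  | 3, p, q => q.2 - p.2 < 0 ∧ 0 ≤ q.1 - p.1

/-- A valid Yao edge selection for `Y₄[G^d(S)]`: for every point `p ∈ S` and every
cone `i`, if some point of `S` lies in the cone `i` of `p` within distance `d`, a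
point is selected there; every selected point lies in `S`, in the correct cone,
within distance `d`, and at minimum distance among all candidates. -/
structure YaoSel4 (S : Finset (ℝ × ℝ)) (d : ℝ) where
  sel : ℝ × ℝ → Fin 4 → Option (ℝ × ℝ)
  sel_mem : ∀ p i q, sel p i = some q →
    p ∈ S ∧ q ∈ S ∧ inCone4 i p q ∧ dE p q ≤ d
  sel_shortest : ∀ p i q, sel p i = some q →
    ∀ r ∈ S, inCone4 i p r → dE p r ≤ d → dE p q ≤ dE p r
  sel_nonempty : ∀ p ∈ S, ∀ (i : Fin 4), ∀ q ∈ S, inCone4 i p q → dE p q ≤ d →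
    (sel p i).isSome

/-- The undirected Yao graph `Y₄[G^d(S)]` induced by a selection `Y`: distinct
points `p, q` are adjacent iff `p` selected `q` in some cone, or vice versa. -/
noncomputable def yaoGraph4 (S : Finset (ℝ × ℝ)) (d : ℝ) (Y : YaoSel4 S d) :
    SimpleGraph {p : ℝ × ℝ // p ∈ S} where
  Adj p q := p ≠ q ∧
    ((∃ i, Y.sel p.1 i = some q.1) ∨ (∃ i, Y.sel q.1 i = some p.1))
  symm := ⟨by rintro p q ⟨h1, h2⟩; exact ⟨h1.symm, h2.symm⟩⟩
  loopless := ⟨fun p h => h.1 rfl⟩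

/-! ### Auxiliary geometry -/

/-- Squared Euclidean distance. -/
def sqd (p q : ℝ × ℝ) : ℝ := (q.1 - p.1)^2 + (q.2 - p.2)^2

/-- L∞ distance. -/
noncomputable def linf (p q : ℝ × ℝ) : ℝ := max |q.1 - p.1| |q.2 - p.2|

lemma sqd_nonneg (p q : ℝ × ℝ) : 0 ≤ sqd p q := by unfold sqd; positivity

lemma dE_eq_sqrt (p q : ℝ × ℝ) : dE p q = Real.sqrt (sqd p q) := by
  unfold dE sqd; congr 1; ring

lemma dE_le_dE_iff (p q r s : ℝ × ℝ) : dE p q ≤ dE r s ↔ sqd p q ≤ sqd r s := by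
  rw [dE_eq_sqrt, dE_eq_sqrt]
  exact Real.sqrt_le_sqrt_iff (sqd_nonneg r s)

lemma dE_le_sqrt_two_iff (p q : ℝ × ℝ) : dE p q ≤ Real.sqrt 2 ↔ sqd p q ≤ 2 := by
  rw [dE_eq_sqrt]
  exact Real.sqrt_le_sqrt_iff (by norm_num)

lemma sqd_le_two_of_linf (p q : ℝ × ℝ) (h : linf p q ≤ 1) : sqd p q ≤ 2 := by
  have h1 : |q.1 - p.1| ≤ 1 := le_trans (le_max_left _ _) h
  have h2 : |q.2 - p.2| ≤ 1 := le_trans (le_max_right _ _) h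
  have a1 := abs_nonneg (q.1 - p.1)
  have a2 := abs_nonneg (q.2 - p.2)
  have s1 := sq_abs (q.1 - p.1)
  have s2 := sq_abs (q.2 - p.2)
  unfold sqd; nlinarith

lemma linf_le_one_of_dE (p q : ℝ × ℝ) (h : dE p q ≤ 1) : linf p q ≤ 1 := by
  have hs : sqd p q ≤ 1 := by
    rw [dE_eq_sqrt] at h
    exact (Real.sqrt_le_sqrt_iff (x := sqd p q) (y := (1:ℝ)) (by norm_num)).mp
      (by rwa [Real.sqrt_one])
  have a1 := abs_nonneg (q.1 - p.1)
  have a2 := abs_nonneg (q.2 - p.2)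
  have s1 := sq_abs (q.1 - p.1)
  have s2 := sq_abs (q.2 - p.2)
  have hx : (q.1 - p.1)^2 + (q.2 - p.2)^2 ≤ 1 := hs
  apply max_le <;> nlinarith

lemma inCone4_ne {i : Fin 4} {x y : ℝ × ℝ} (h : inCone4 i x y) : x ≠ y := by
  rintro rfl
  fin_cases i <;> simp [inCone4] at h

lemma exists_cone (x y : ℝ × ℝ) (h : x ≠ y) : ∃ i : Fin 4, inCone4 i x y := by
  have hne : y.1 - x.1 ≠ 0 ∨ y.2 - x.2 ≠ 0 := by
    by_contra hcon
    push_neg at hcon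
    apply h
    have e1 : x.1 = y.1 := by linarith [hcon.1, sub_eq_zero.mp hcon.1]
    have e2 : x.2 = y.2 := by linarith [hcon.2, sub_eq_zero.mp hcon.2]
    exact Prod.ext e1 e2
  rcases lt_trichotomy (y.1 - x.1) 0 with h1 | h1 | h1 <;>
    rcases lt_trichotomy (y.2 - x.2) 0 with h2 | h2 | h2
  · exact ⟨2, h1, h2.le⟩
  · exact ⟨2, h1, h2.le⟩
  · exact ⟨1, h2, h1.le⟩
  · exact ⟨3, h2, by linarith⟩
  · exact absurd (Or.elim hne (fun t => t h1) (fun t => t h2)) (by simp)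
  · exact ⟨1, h2, h1.le⟩
  · exact ⟨3, h2, h1.le⟩
  · exact ⟨0, h1, h2.ge⟩
  · exact ⟨0, h1, h2.le⟩

lemma linf_vec (x y : ℝ × ℝ) : linf x y = max |(y - x).1| |(y - x).2| := by
  simp [linf]

lemma sqd_vec (x y : ℝ × ℝ) : sqd x y = (y - x).1^2 + (y - x).2^2 := by
  simp [sqd]

/-! ### Core arithmetic lemmas (one quarter cone, cone-0 coordinates) -/

lemma core_le (a b c d : ℝ) (ha : 0 < a) (hb : 0 ≤ b) (hc : 0 < c) (hd : 0 ≤ d)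
    (hle : a^2 + b^2 ≤ c^2 + d^2) : max |a - c| |b - d| ≤ max c d := by
  have h1 : a ≤ c + d := by nlinarith
  have h2 : b ≤ c + d := by nlinarith
  have hmc := le_max_left c d
  have hmd := le_max_right c d
  apply max_le
  · rw [abs_le]; constructor <;> [linarith; linarith]
  · rw [abs_le]; constructor <;> [linarith; linarith]

lemma core_tie (a b c d : ℝ) (ha : 0 < a) (hb : 0 ≤ b) (hc : 0 < c) (hd : 0 ≤ d)
    (hle : a^2 + b^2 ≤ c^2 + d^2) (htie : max |a - c| |b - d| = max c d) :
    b = 0 ∧ c ≤ d := by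
  have hmc := le_max_left c d
  have hmd := le_max_right c d
  have hac : |a - c| < max c d := by
    rcases le_or_gt a c with h | h
    · rw [abs_of_nonpos (by linarith)]; linarith
    · rw [abs_of_pos (by linarith)]
      have hdne : d ≠ 0 := by intro h0; rw [h0] at hle; nlinarith
      have hd0 : 0 < d := lt_of_le_of_ne hd (Ne.symm hdne)
      have : a < c + d := by nlinarith
      linarith
  have hbd : |b - d| = max c d := by
    rcases le_total |a - c| |b - d| with h | h
    · rw [max_eq_right h] at htie; exact htie
    · rw [max_eq_left h] at htie; linarith
  rcases le_or_gt b d with h | h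
  · rw [abs_of_nonpos (by linarith)] at hbd
    have hb0 : b = 0 := le_antisymm (by linarith) hb
    refine ⟨hb0, ?_⟩
    rw [hb0] at hbd
    have : max c d = d := by linarith
    linarith
  · exfalso
    rw [abs_of_pos (by linarith)] at hbd
    rcases eq_or_lt_of_le hd with h0 | h0
    · rw [← h0] at hbd h
      rw [max_eq_left hc.le] at hbd
      nlinarith
    · have : b < c + d := by nlinarith
      linarith

lemma core_bad (a c d : ℝ) (ha : 0 < a) (hc : 0 < c) (hd : 0 ≤ d)
    (hle : a^2 ≤ c^2 + d^2) (hsq : c^2 + d^2 ≤ (a - c)^2 + d^2) :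
    2*c ≤ a ∧ 0 < a - c ∧ a - c < d := by
  have h1 : 2*c ≤ a := by nlinarith
  have h2 : 0 < a - c := by linarith
  have hd2 : 3*c^2 ≤ d^2 := by nlinarith
  have hd0 : 0 < d := by nlinarith
  exact ⟨h1, h2, by nlinarith⟩

/-! ### The crux: a minimal unreachable pair leads to a contradiction -/

set_option maxHeartbeats 1000000 in
lemma crux (S : Finset (ℝ × ℝ)) (Y : YaoSel4 S (Real.sqrt 2))
    (U W : ℝ × ℝ → ℝ)
    (hUsub : ∀ x y : ℝ × ℝ, U (x - y) = U x - U y)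
    (hWsub : ∀ x y : ℝ × ℝ, W (x - y) = W x - W y)
    (hUW : ∀ w : ℝ × ℝ, max |U w| |W w| = max |w.1| |w.2|)
    (hsqUW : ∀ w : ℝ × ℝ, (U w)^2 + (W w)^2 = w.1^2 + w.2^2)
    (i j : Fin 4)
    (hi : ∀ x y : ℝ × ℝ, inCone4 i x y ↔ 0 < U (y - x) ∧ 0 ≤ W (y - x))
    (hj : ∀ x y : ℝ × ℝ, inCone4 j x y ↔ 0 < W (y - x) ∧ 0 ≤ -U (y - x))
    (p q : {x : ℝ × ℝ // x ∈ S})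
    (hnr : ¬ (yaoGraph4 S (Real.sqrt 2) Y).Reachable p q)
    (h1 : linf p.1 q.1 ≤ 1)
    (hcone : inCone4 i p.1 q.1)
    (hmin1 : ∀ u v : {x : ℝ × ℝ // x ∈ S},
      ¬ (yaoGraph4 S (Real.sqrt 2) Y).Reachable u v →
      linf u.1 v.1 ≤ 1 → linf p.1 q.1 ≤ linf u.1 v.1)
    (hmin2 : ∀ u v : {x : ℝ × ℝ // x ∈ S},
      ¬ (yaoGraph4 S (Real.sqrt 2) Y).Reachable u v →
      linf u.1 v.1 = linf p.1 q.1 → sqd p.1 q.1 ≤ sqd u.1 v.1) :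
    False := by
  obtain ⟨hc, hd⟩ := (hi p.1 q.1).mp hcone
  have hlpq : linf p.1 q.1 = max (U (q.1 - p.1)) (W (q.1 - p.1)) := by
    rw [linf_vec, ← hUW (q.1 - p.1), abs_of_pos hc, abs_of_nonneg hd]
  have hspq : sqd p.1 q.1 = (U (q.1 - p.1))^2 + (W (q.1 - p.1))^2 := by
    rw [sqd_vec, ← hsqUW (q.1 - p.1)]
  -- first selection, at p
  have hdE2 : dE p.1 q.1 ≤ Real.sqrt 2 :=
    (dE_le_sqrt_two_iff _ _).mpr (sqd_le_two_of_linf _ _ h1)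
  obtain ⟨r0, hr⟩ := Option.isSome_iff_exists.mp
    (Y.sel_nonempty p.1 p.2 i q.1 q.2 hcone hdE2)
  obtain ⟨-, hr0S, hconer, hdEr⟩ := Y.sel_mem p.1 i r0 hr
  have hshort := Y.sel_shortest p.1 i r0 hr q.1 q.2 hcone hdE2
  obtain ⟨ha, hb⟩ := (hi p.1 r0).mp hconer
  have hle : (U (r0 - p.1))^2 + (W (r0 - p.1))^2
      ≤ (U (q.1 - p.1))^2 + (W (q.1 - p.1))^2 := by
    have h := (dE_le_dE_iff _ _ _ _).mp hshort
    rwa [sqd_vec, sqd_vec, ← hsqUW (r0 - p.1), ← hsqUW (q.1 - p.1)] at h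
  set r : {x : ℝ × ℝ // x ∈ S} := ⟨r0, hr0S⟩ with hrdef
  have hadj : (yaoGraph4 S (Real.sqrt 2) Y).Adj p r :=
    ⟨fun h => (inCone4_ne hconer) (congrArg Subtype.val h), Or.inl ⟨i, hr⟩⟩
  have hnrr : ¬ (yaoGraph4 S (Real.sqrt 2) Y).Reachable r q :=
    fun h => hnr (hadj.reachable.trans h)
  -- vector bookkeeping for the pair (r, q)
  have hvec : q.1 - r0 = (q.1 - p.1) - (r0 - p.1) := (sub_sub_sub_cancel_right _ _ _).symm
  have hUqr : U (q.1 - r0) = U (q.1 - p.1) - U (r0 - p.1) := by rw [hvec, hUsub]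
  have hWqr : W (q.1 - r0) = W (q.1 - p.1) - W (r0 - p.1) := by rw [hvec, hWsub]
  have hlinfr : linf r.1 q.1
      = max |U (r0 - p.1) - U (q.1 - p.1)| |W (r0 - p.1) - W (q.1 - p.1)| := by
    rw [show r.1 = r0 from rfl, linf_vec, ← hUW (q.1 - r0), hUqr, hWqr,
      abs_sub_comm (U (q.1 - p.1)), abs_sub_comm (W (q.1 - p.1))]
  have hsqdr : sqd r.1 q.1
      = (U (r0 - p.1) - U (q.1 - p.1))^2 + (W (r0 - p.1) - W (q.1 - p.1))^2 := by
    rw [show r.1 = r0 from rfl, sqd_vec, ← hsqUW (q.1 - r0), hUqr, hWqr]; ring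
  -- minimality forces the tie configuration
  have hlrq_le : linf r.1 q.1 ≤ linf p.1 q.1 := by
    rw [hlinfr, hlpq]
    exact core_le _ _ _ _ ha hb hc hd hle
  have hlrq1 : linf r.1 q.1 ≤ 1 := le_trans hlrq_le h1
  have heq : linf r.1 q.1 = linf p.1 q.1 :=
    le_antisymm hlrq_le (hmin1 r q hnrr hlrq1)
  have hsqge : (U (q.1 - p.1))^2 + (W (q.1 - p.1))^2
      ≤ (U (r0 - p.1) - U (q.1 - p.1))^2 + (W (r0 - p.1) - W (q.1 - p.1))^2 := by
    have h := hmin2 r q hnrr heq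
    rwa [hspq, hsqdr] at h
  have htie : max |U (r0 - p.1) - U (q.1 - p.1)| |W (r0 - p.1) - W (q.1 - p.1)|
      = max (U (q.1 - p.1)) (W (q.1 - p.1)) := by
    rw [← hlinfr, heq, hlpq]
  obtain ⟨hb0, hcd⟩ := core_tie _ _ _ _ ha hb hc hd hle htie
  obtain ⟨h2c, hac0, hacd⟩ := core_bad (U (r0 - p.1)) (U (q.1 - p.1)) (W (q.1 - p.1))
    ha hc hd (by nlinarith [hle, hb0]) (by nlinarith [hsqge, hb0])
  -- second selection, at r
  have hWd : W (q.1 - r0) = W (q.1 - p.1) := by rw [hWqr, hb0]; ring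
  have hconej : inCone4 j r0 q.1 := (hj r0 q.1).mpr
    ⟨by rw [hWd]; linarith, by rw [hUqr]; linarith⟩
  have hdE2' : dE r0 q.1 ≤ Real.sqrt 2 :=
    (dE_le_sqrt_two_iff _ _).mpr (sqd_le_two_of_linf _ _ hlrq1)
  obtain ⟨s0, hs⟩ := Option.isSome_iff_exists.mp
    (Y.sel_nonempty r0 hr0S j q.1 q.2 hconej hdE2')
  obtain ⟨-, hs0S, hcones, hdEs⟩ := Y.sel_mem r0 j s0 hs
  have hshort2 := Y.sel_shortest r0 j s0 hs q.1 q.2 hconej hdE2'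
  obtain ⟨ha2, hb2⟩ := (hj r0 s0).mp hcones
  have hc2 : (0:ℝ) < W (q.1 - r0) := by rw [hWd]; linarith
  have hd2 : (0:ℝ) ≤ -U (q.1 - r0) := by rw [hUqr]; linarith
  have hle2 : (W (s0 - r0))^2 + (-U (s0 - r0))^2
      ≤ (W (q.1 - r0))^2 + (-U (q.1 - r0))^2 := by
    have h := (dE_le_dE_iff _ _ _ _).mp hshort2
    rw [sqd_vec, sqd_vec, ← hsqUW (s0 - r0), ← hsqUW (q.1 - r0)] at h
    nlinarith [h]
  set s : {x : ℝ × ℝ // x ∈ S} := ⟨s0, hs0S⟩ with hsdef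
  have hadj2 : (yaoGraph4 S (Real.sqrt 2) Y).Adj r s :=
    ⟨fun h => (inCone4_ne hcones) (congrArg Subtype.val h), Or.inl ⟨j, hs⟩⟩
  have hnrs : ¬ (yaoGraph4 S (Real.sqrt 2) Y).Reachable s q :=
    fun h => hnr (hadj.reachable.trans (hadj2.reachable.trans h))
  -- pair (s, q)
  have hvec2 : q.1 - s0 = (q.1 - r0) - (s0 - r0) := (sub_sub_sub_cancel_right _ _ _).symm
  have hUsq : U (q.1 - s0) = -U (s0 - r0) - -U (q.1 - r0) := by
    rw [hvec2, hUsub]; ring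
  have hWsq : W (q.1 - s0) = -(W (s0 - r0) - W (q.1 - r0)) := by
    rw [hvec2, hWsub]; ring
  have hlinfs : linf s.1 q.1
      = max |W (s0 - r0) - W (q.1 - r0)| |(-U (s0 - r0)) - (-U (q.1 - r0))| := by
    rw [show s.1 = s0 from rfl, linf_vec, ← hUW (q.1 - s0), hUsq, hWsq,
      abs_neg, max_comm]
  have hmaxr : max (W (q.1 - r0)) (-U (q.1 - r0)) = linf r.1 q.1 := by
    rw [show r.1 = r0 from rfl, linf_vec, ← hUW (q.1 - r0),
      abs_of_nonpos (show U (q.1 - r0) ≤ 0 by rw [hUqr]; linarith),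
      abs_of_pos hc2, max_comm]
  have hlsq_le : linf s.1 q.1 ≤ linf r.1 q.1 := by
    rw [hlinfs, ← hmaxr]
    exact core_le _ _ _ _ ha2 hb2 hc2 hd2 hle2
  have hlsq1 : linf s.1 q.1 ≤ 1 := le_trans hlsq_le hlrq1
  have heq2 : linf s.1 q.1 = linf p.1 q.1 :=
    le_antisymm (le_trans hlsq_le (le_of_eq heq)) (hmin1 s q hnrs hlsq1)
  have htie2 : max |W (s0 - r0) - W (q.1 - r0)| |(-U (s0 - r0)) - (-U (q.1 - r0))|
      = max (W (q.1 - r0)) (-U (q.1 - r0)) := by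
    rw [← hlinfs, heq2, ← heq, hmaxr]
  obtain ⟨-, hfinal⟩ := core_tie _ _ _ _ ha2 hb2 hc2 hd2 hle2 htie2
  -- hfinal : W (q.1 - r0) ≤ -U (q.1 - r0), i.e. d ≤ a - c, contradiction
  rw [hWd] at hfinal
  rw [hUqr] at hfinal
  linarith

/-! ### The key connectivity lemma -/

lemma key (S : Finset (ℝ × ℝ)) (Y : YaoSel4 S (Real.sqrt 2)) :
    ∀ u v : {x : ℝ × ℝ // x ∈ S}, linf u.1 v.1 ≤ 1 →
      (yaoGraph4 S (Real.sqrt 2) Y).Reachable u v := by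
  by_contra hcon
  push_neg at hcon
  obtain ⟨u0, v0, hl0, hnr0⟩ := hcon
  classical
  let T : Finset ({x : ℝ × ℝ // x ∈ S} × {x : ℝ × ℝ // x ∈ S}) :=
    Finset.univ.filter
      (fun e => linf e.1.1 e.2.1 ≤ 1 ∧
        ¬ (yaoGraph4 S (Real.sqrt 2) Y).Reachable e.1 e.2)
  have hT : T.Nonempty := ⟨(u0, v0), by simp [T, hl0, hnr0]⟩
  obtain ⟨e1, he1, hm1⟩ := T.exists_min_image (fun e => linf e.1.1 e.2.1) hT
  have hT2 : (T.filter (fun e => linf e.1.1 e.2.1 = linf e1.1.1 e1.2.1)).Nonempty :=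
    ⟨e1, Finset.mem_filter.mpr ⟨he1, rfl⟩⟩
  obtain ⟨e2, he2, hm2⟩ :=
    (T.filter (fun e => linf e.1.1 e.2.1 = linf e1.1.1 e1.2.1)).exists_min_image
      (fun e => sqd e.1.1 e.2.1) hT2
  obtain ⟨he2T, he2eq⟩ := Finset.mem_filter.mp he2
  have hTand := (Finset.mem_filter.mp he2T).2
  obtain ⟨hl, hnr⟩ := hTand
  set p := e2.1 with hp
  set q := e2.2 with hq
  have hpq : p ≠ q := fun h => hnr (by rw [h])
  have hpq1 : p.1 ≠ q.1 := fun h => hpq (Subtype.ext h)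
  obtain ⟨i, hcone⟩ := exists_cone p.1 q.1 hpq1
  have hmin1 : ∀ u v : {x : ℝ × ℝ // x ∈ S},
      ¬ (yaoGraph4 S (Real.sqrt 2) Y).Reachable u v →
      linf u.1 v.1 ≤ 1 → linf p.1 q.1 ≤ linf u.1 v.1 := by
    intro u v h hl1
    have := hm1 (u, v) (by simp [T, hl1, h])
    rw [he2eq]
    exact this
  have hmin2 : ∀ u v : {x : ℝ × ℝ // x ∈ S},
      ¬ (yaoGraph4 S (Real.sqrt 2) Y).Reachable u v →
      linf u.1 v.1 = linf p.1 q.1 → sqd p.1 q.1 ≤ sqd u.1 v.1 := by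
    intro u v h heq'
    refine hm2 (u, v) (Finset.mem_filter.mpr ⟨?_, ?_⟩)
    · have : linf u.1 v.1 ≤ 1 := by rw [heq']; exact hl
      simp [T, this, h]
    · show linf u.1 v.1 = linf e1.1.1 e1.2.1
      rw [heq']; exact he2eq
  fin_cases i
  · exact crux S Y (fun w => w.1) (fun w => w.2)
      (fun x y => by simp) (fun x y => by simp)
      (fun w => rfl) (fun w => rfl) 0 1
      (fun x y => by simp [inCone4])
      (fun x y => by simp [inCone4, and_comm])
      p q hnr hl hcone hmin1 hmin2
  · exact crux S Y (fun w => w.2) (fun w => -w.1)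
      (fun x y => by simp) (fun x y => by simp; ring)
      (fun w => by simp [abs_neg, max_comm]) (fun w => by ring) 1 2
      (fun x y => by simp [inCone4])
      (fun x y => by simp [inCone4, and_comm])
      p q hnr hl hcone hmin1 hmin2
  · exact crux S Y (fun w => -w.1) (fun w => -w.2)
      (fun x y => by simp; ring) (fun x y => by simp; ring)
      (fun w => by simp [abs_neg]) (fun w => by ring) 2 3
      (fun x y => by simp [inCone4])
      (fun x y => by simp [inCone4, and_comm])
      p q hnr hl hcone hmin1 hmin2
  · exact crux S Y (fun w => -w.2) (fun w => w.1)
      (fun x y => by simp; ring) (fun x y => by simp)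
      (fun w => by simp [abs_neg, max_comm]) (fun w => by ring) 3 0
      (fun x y => by simp [inCone4])
      (fun x y => by simp [inCone4, and_comm])
      p q hnr hl hcone hmin1 hmin2

/-- If the unit disk graph `G¹(S)` is connected, then for every valid Yao edge
selection, the undirected Yao graph `Y₄[G^√2(S)]` is connected. -/
theorem y4_sqrt_two_connected (S : Finset (ℝ × ℝ))
    (hconn : (diskGraph S 1).Connected) (Y : YaoSel4 S (Real.sqrt 2)) :
    (yaoGraph4 S (Real.sqrt 2) Y).Connected := by
  obtain ⟨hpre, hne⟩ := (SimpleGraph.connected_iff (G := diskGraph S 1)).mp hconn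
  rw [SimpleGraph.connected_iff]
  refine ⟨fun u v => ?_, hne⟩
  refine (hpre u v).elim fun w => ?_
  induction w with
  | nil => exact SimpleGraph.Reachable.refl _
  | cons hadj _ ih =>
    exact (key S Y _ _ (linf_le_one_of_dE _ _ hadj.2)).trans ih
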